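/- arXiv:1201.0236 — 4 statements merged into one kernel-verified Lean document; each statement's English description precedes it below -/
import Mathlib

section
/- If a and b are nonzero quaternions such that both a*b and a*(conjugate of b) are real, then either both a and b are real, or both a and b are purely imaginary. -/
open Quaternion

theorem stmt1 (a b : ℍ[ℝ]) (ha : a ≠ 0) (hb : b ≠ 0)
    (hab : ∃ r : ℝ, a * b = (r : ℍ[ℝ]))
    (hab' : ∃ r : ℝ, a * star b = (r : ℍ[ℝ])) :
    ((∃ r : ℝ, a = (r : ℍ[ℝ])) ∧ (∃ s : ℝ, b = (s : ℍ[ℝ]))) ∨ (a.re = 0 ∧ b.re = 0) := by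
  obtain ⟨r, hr⟩ := hab
  obtain ⟨s, hs⟩ := hab'
  have hr0 : r ≠ 0 := by
    rintro rfl
    simp only [Quaternion.coe_zero] at hr
    exact mul_ne_zero ha hb hr
  by_cases hbre : b.re = 0
  · right
    refine ⟨?_, hbre⟩
    have key : ((Quaternion.normSq a : ℝ) : ℍ[ℝ]) * b = star a * (r : ℍ[ℝ]) := by
      rw [← hr, ← mul_assoc, Quaternion.star_mul_self]
    have := congrArg QuaternionAlgebra.re key
    simp [Quaternion.re_mul, hbre] at this
    exact this.resolve_right hr0
  · left
    have h2 : a * ((2 * b.re : ℝ) : ℍ[ℝ]) = ((r + s : ℝ) : ℍ[ℝ]) := by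
      rw [← Quaternion.self_add_star', mul_add, hr, hs, Quaternion.coe_add]
    have ht : ((2 * b.re : ℝ) : ℍ[ℝ]) ≠ 0 := by
      exact fun h => mul_ne_zero (two_ne_zero) hbre (Quaternion.coe_injective (h.trans Quaternion.coe_zero.symm))
    have ha' : a = (((r + s) / (2 * b.re) : ℝ) : ℍ[ℝ]) := by
      rw [Quaternion.coe_div, eq_div_iff ht, h2]
    set u : ℝ := (r + s) / (2 * b.re) with hu
    have hu0 : u ≠ 0 := by
      rintro h
      exact ha (by rw [ha', h, Quaternion.coe_zero])
    refine ⟨⟨u, ha'⟩, ⟨r / u, ?_⟩⟩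
    have : (u : ℍ[ℝ]) * b = (r : ℍ[ℝ]) := by rw [← ha', hr]
    rw [Quaternion.coe_div, eq_div_iff (fun h => hu0 (Quaternion.coe_injective (h.trans Quaternion.coe_zero.symm))), ← Quaternion.coe_commutes]
    exact this
end

section
/- Let μ be a unit quaternion with real part μ₀ and imaginary coordinates μ₁, μ₂, μ₃, let λ > 1 be real, and set ν = ((λ⁴+1)/(λ(λ²+1)))·μ₀ − (λ+1/λ)·(μ₁i+μ₂j+μ₃k). If (λ⁴ + 1/λ⁴)·μ⁴ + ν⁴ is real, then μ₀·μ₁ = μ₀·μ₂ = μ₀·μ₃ = 0. -/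
open Quaternion

/-!
Since `q ^ 2 = re q ^ 2 - |im q| ^ 2 + 2 re q • im q`, the imaginary part of `q ^ 4` is
`4 re q (re q ^ 2 - |im q| ^ 2) • im q`. As `im ν` is a multiple of `im μ`, the imaginary part of
`(Λ⁴ + Λ⁻⁴) μ⁴ + ν⁴` is `K • im μ`, where `K` factors as
`8 (Λ⁴ + Λ² + 1) / Λ² · ((Λ² - 1)² / (Λ² + 1)² · μ₀² + |im μ|²) · μ₀`.
For `Λ > 1` the middle factor is a sum of nonnegative terms that vanishes only if `μ₀ = 0`,
so `K • im μ = 0` forces `μ₀ = 0` or `im μ = 0`.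
-/

theorem Quaternion.im_pow_four {R : Type*} [CommRing R] (q : ℍ[R]) :
    (q ^ 4).im = (4 * q.re * (q.re ^ 2 - normSq q.im)) • q.im := by
  ext <;> simp [pow_succ, normSq_def'] <;> ring

lemma quartic_im_coeff_eq (Λ a s : ℝ) (hΛ : Λ ≠ 0) :
    (Λ ^ 4 + 1 / Λ ^ 4) * (4 * a * (a ^ 2 - s))
      + 4 * ((Λ ^ 4 + 1) / (Λ * (Λ ^ 2 + 1)) * a)
        * (((Λ ^ 4 + 1) / (Λ * (Λ ^ 2 + 1)) * a) ^ 2 - (-(Λ + 1 / Λ)) ^ 2 * s) * (-(Λ + 1 / Λ))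
      = 8 * (Λ ^ 4 + Λ ^ 2 + 1) / Λ ^ 2 * ((Λ ^ 2 - 1) ^ 2 / (Λ ^ 2 + 1) ^ 2 * a ^ 2 + s) * a := by
  have : Λ ^ 2 + 1 ≠ 0 := by positivity
  field_simp
  ring

lemma eq_zero_of_quartic_im_coeff_eq_zero {Λ a s : ℝ} (hΛ : 1 < Λ) (hs : 0 ≤ s)
    (h : 8 * (Λ ^ 4 + Λ ^ 2 + 1) / Λ ^ 2 * ((Λ ^ 2 - 1) ^ 2 / (Λ ^ 2 + 1) ^ 2 * a ^ 2 + s) * a = 0) :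
    a = 0 := by
  have hweight : 0 < (Λ ^ 2 - 1) ^ 2 / (Λ ^ 2 + 1) ^ 2 := by
    have : 0 < Λ ^ 2 - 1 := sub_pos.mpr (one_lt_pow₀ hΛ two_ne_zero)
    positivity
  rcases mul_eq_zero.mp h with h | h
  · have hbracket : (Λ ^ 2 - 1) ^ 2 / (Λ ^ 2 + 1) ^ 2 * a ^ 2 + s = 0 :=
      (mul_eq_zero.mp h).resolve_left (by positivity)
    have : a ^ 2 = 0 := by nlinarith [mul_nonneg hweight.le (sq_nonneg a)]
    exact pow_eq_zero_iff two_ne_zero |>.mp this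
  · exact h

theorem stmt4_general (μ : ℍ[ℝ]) (Λ : ℝ) (hΛ : 1 < Λ)
    (ν : ℍ[ℝ])
    (hν : ν = (((Λ ^ 4 + 1) / (Λ * (Λ ^ 2 + 1)) * μ.re : ℝ) : ℍ[ℝ])
            - ((Λ + 1 / Λ : ℝ) : ℍ[ℝ]) * (μ - ((μ.re : ℝ) : ℍ[ℝ])))
    (h : ∃ r : ℝ, ((Λ ^ 4 + 1 / Λ ^ 4 : ℝ) : ℍ[ℝ]) * μ ^ 4 + ν ^ 4 = (r : ℍ[ℝ])) :
    μ.re * μ.imI = 0 ∧ μ.re * μ.imJ = 0 ∧ μ.re * μ.imK = 0 := by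
  obtain ⟨r, hr⟩ := h
  have hνre : ν.re = (Λ ^ 4 + 1) / (Λ * (Λ ^ 2 + 1)) * μ.re := by
    rw [hν, re_sub, re_coe, coe_mul_eq_smul, re_smul, re_sub, re_coe, sub_self, smul_zero,
      sub_zero]
  have hνim : ν.im = (-(Λ + 1 / Λ)) • μ.im := by
    rw [hν, im_sub, im_coe, coe_mul_eq_smul, im_smul, im_sub, im_coe, sub_zero, zero_sub,
      neg_smul]
  have him := congrArg Quaternion.im hr
  rw [im_coe, im_add, coe_mul_eq_smul, im_smul, im_pow_four, im_pow_four, hνre, hνim,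
    normSq_smul, smul_smul, smul_smul, ← add_smul,
    quartic_im_coeff_eq _ _ _ (by positivity)] at him
  rcases smul_eq_zero.mp him with hcoeff | him_zero
  · simp [eq_zero_of_quartic_im_coeff_eq_zero hΛ normSq_nonneg hcoeff]
  · rw [← imI_im, ← imJ_im, ← imK_im, him_zero]
    simp

theorem stmt4 (μ : ℍ[ℝ]) (hμ : ‖μ‖ = 1) (Λ : ℝ) (hΛ : 1 < Λ)
    (ν : ℍ[ℝ])
    (hν : ν = (((Λ ^ 4 + 1) / (Λ * (Λ ^ 2 + 1)) * μ.re : ℝ) : ℍ[ℝ])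
            - ((Λ + 1 / Λ : ℝ) : ℍ[ℝ]) * (μ - ((μ.re : ℝ) : ℍ[ℝ])))
    (h : ∃ r : ℝ, ((Λ ^ 4 + 1 / Λ ^ 4 : ℝ) : ℍ[ℝ]) * μ ^ 4 + ν ^ 4 = (r : ℍ[ℝ])) :
    μ.re * μ.imI = 0 ∧ μ.re * μ.imJ = 0 ∧ μ.re * μ.imK = 0 :=
  stmt4_general μ Λ hΛ ν hν h
end

section
/- Let μ and ν be unit quaternions and λ > 1 a real number such that the traces λμ + ν + μ/λ, (λ²+1/λ²)μ² + ν², and (λ⁴+1/λ⁴)μ⁴ + ν⁴ are all real. Then μ ∈ {1, −1} and ν ∈ {1, −1}. -/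
/-!
Write `a = λ + λ⁻¹ ≥ 2`, so that `λ² + λ⁻² = a² - 2`, and split `μ = m + u`, `ν = n + v` into real
and imaginary parts. Reality of the first trace gives `v = -a u`; since `(m + u)² = m² - |u|² + 2 m u`,
reality of the second gives `((a² - 2) m - a n) u = 0`. If `u ≠ 0`, then `(a² - 2) m = a n` together
with `m² + |u|² = 1 = n² + a² |u|²` forces `(a² - 1)(a² - 4 + 4 |u|²) = 0`, impossible for `a ≥ 2`.
Hence `u = v = 0`, and a real unit is `±1`.
-/

open Quaternion

lemma two_le_add_inv_self {K : Type*} [Field K] [LinearOrder K] [IsStrictOrderedRing K]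
    {x : K} (hx : 0 < x) : 2 ≤ x + x⁻¹ := by
  have h : x + x⁻¹ - 2 = (x - 1) ^ 2 / x := by field_simp; ring
  linarith [div_nonneg (sq_nonneg (x - 1)) hx.le]

namespace Quaternion

section CommRing

variable {R : Type*} [CommRing R]

lemma normSq_eq_re_sq_add_normSq_im (q : ℍ[R]) : normSq q = q.re ^ 2 + normSq q.im := by
  conv_lhs => rw [← re_add_im q]
  rw [normSq_add, normSq_coe, coe_mul_eq_smul, re_smul, re_star, re_im]
  simp

lemma im_sq_eq_two_mul_re_smul_im (q : ℍ[R]) : (q ^ 2).im = (2 * q.re) • q.im := by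
  conv_lhs => rw [← re_add_im q]
  rw [sq, add_mul, mul_add, mul_add, ← sq, ← sq, ← coe_pow, im_sq, coe_mul_eq_smul, mul_coe_eq_smul]
  simp only [im_add, im_coe, im_smul, im_neg, im_idem, zero_add, neg_zero, add_zero, two_mul,
    add_smul]

end CommRing

lemma eq_one_or_eq_neg_one_of_norm_eq_one_of_im_eq_zero {q : ℍ[ℝ]} (hq : ‖q‖ = 1)
    (him : q.im = 0) : q = 1 ∨ q = -1 := by
  have hre : q = (q.re : ℍ[ℝ]) := by rw [← re_add_im q, him, add_zero, re_coe]
  rw [hre, norm_coe, Real.norm_eq_abs] at hq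
  rcases abs_eq (zero_le_one' ℝ) |>.mp hq with h | h
  · left; rw [hre, h, coe_one]
  · right; rw [hre, h, coe_neg, coe_one]

lemma im_eq_zero_of_im_add_eq_zero_of_im_sq_add_eq_zero {a : ℝ} (ha : 2 ≤ a) {μ ν : ℍ[ℝ]}
    (hμ : normSq μ = 1) (hν : normSq ν = 1) (h1 : a • μ.im + ν.im = 0)
    (h2 : (a ^ 2 - 2) • (μ ^ 2).im + (ν ^ 2).im = 0) : μ.im = 0 := by
  by_contra hu
  have hν_im : ν.im = -(a • μ.im) := eq_neg_of_add_eq_zero_right h1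
  have hs : 0 < normSq μ.im := normSq_nonneg.lt_of_ne' (normSq_ne_zero.mpr hu)
  have hmn : (a ^ 2 - 2) * μ.re = a * ν.re := by
    rw [im_sq_eq_two_mul_re_smul_im, im_sq_eq_two_mul_re_smul_im, hν_im, smul_smul, smul_neg,
      smul_smul, ← sub_eq_add_neg, ← sub_smul, smul_eq_zero] at h2
    linear_combination (h2.resolve_right hu) / 2
  rw [normSq_eq_re_sq_add_normSq_im] at hμ
  rw [normSq_eq_re_sq_add_normSq_im, hν_im, normSq_neg, normSq_smul] at hν
  have key : (a ^ 2 - 1) * (a ^ 2 - 4 + 4 * normSq μ.im) = 0 := by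
    linear_combination ((a ^ 2 - 2) * μ.re + a * ν.re) * hmn - (a ^ 2 - 2) ^ 2 * hμ + a ^ 2 * hν
  have ha_sq : 4 ≤ a ^ 2 := by nlinarith
  have hpos : 0 < (a ^ 2 - 1) * (a ^ 2 - 4 + 4 * normSq μ.im) := by
    apply mul_pos <;> linarith
  exact hpos.ne' key

end Quaternion

theorem stmt5_general (μ ν : ℍ[ℝ]) (hμ : ‖μ‖ = 1) (hν : ‖ν‖ = 1) (Λ : ℝ) (hΛ : 1 < Λ)
    (h1 : ∃ r : ℝ, (Λ : ℍ[ℝ]) * μ + ν + μ / (Λ : ℍ[ℝ]) = (r : ℍ[ℝ]))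
    (h2 : ∃ r : ℝ, ((Λ ^ 2 + 1 / Λ ^ 2 : ℝ) : ℍ[ℝ]) * μ ^ 2 + ν ^ 2 = (r : ℍ[ℝ])) :
    (μ = 1 ∨ μ = -1) ∧ (ν = 1 ∨ ν = -1) := by
  obtain ⟨r₁, hr₁⟩ := h1
  obtain ⟨r₂, hr₂⟩ := h2
  have hΛ₀ : 0 < Λ := zero_lt_one.trans hΛ
  have hnormSq {q : ℍ[ℝ]} (hq : ‖q‖ = 1) : normSq q = 1 := by
    rw [normSq_eq_norm_mul_self, hq, mul_one]
  have hsq : Λ ^ 2 + 1 / Λ ^ 2 = (Λ + Λ⁻¹) ^ 2 - 2 := by field_simp; ring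
  have him₁ : (Λ + Λ⁻¹) • μ.im + ν.im = 0 := by
    have := congrArg Quaternion.im hr₁
    rwa [div_eq_mul_inv, ← coe_inv, coe_mul_eq_smul, mul_coe_eq_smul, im_add, im_add, im_smul,
      im_smul, im_coe, add_right_comm, ← add_smul] at this
  have him₂ : ((Λ + Λ⁻¹) ^ 2 - 2) • (μ ^ 2).im + (ν ^ 2).im = 0 := by
    have := congrArg Quaternion.im hr₂
    rwa [coe_mul_eq_smul, im_add, im_smul, im_coe, hsq] at this
  have hμ_im := im_eq_zero_of_im_add_eq_zero_of_im_sq_add_eq_zero (two_le_add_inv_self hΛ₀)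
    (hnormSq hμ) (hnormSq hν) him₁ him₂
  have hν_im : ν.im = 0 := by rwa [hμ_im, smul_zero, zero_add] at him₁
  exact ⟨eq_one_or_eq_neg_one_of_norm_eq_one_of_im_eq_zero hμ hμ_im,
    eq_one_or_eq_neg_one_of_norm_eq_one_of_im_eq_zero hν hν_im⟩

theorem stmt5 (μ ν : ℍ[ℝ]) (hμ : ‖μ‖ = 1) (hν : ‖ν‖ = 1) (Λ : ℝ) (hΛ : 1 < Λ)
    (h1 : ∃ r : ℝ, (Λ : ℍ[ℝ]) * μ + ν + μ / (Λ : ℍ[ℝ]) = (r : ℍ[ℝ]))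
    (h2 : ∃ r : ℝ, ((Λ ^ 2 + 1 / Λ ^ 2 : ℝ) : ℍ[ℝ]) * μ ^ 2 + ν ^ 2 = (r : ℍ[ℝ]))
    (h4 : ∃ r : ℝ, ((Λ ^ 4 + 1 / Λ ^ 4 : ℝ) : ℍ[ℝ]) * μ ^ 4 + ν ^ 4 = (r : ℍ[ℝ])) :
    (μ = 1 ∨ μ = -1) ∧ (ν = 1 ∨ ν = -1) :=
  stmt5_general μ ν hμ hν Λ hΛ h1 h2
end

section
/- Let B ∈ Sp(2,1) with entries a,b,c / d,e,f / g,h,l such that a, e, l are real and c, g are purely imaginary quaternions. Then b = d = f = h = 0, i.e., B has the block form with only a, e, l, c, g possibly nonzero. -/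
open Quaternion Matrix

set_option maxHeartbeats 1000000 in
theorem stmt13 (a b c d e f g h l : ℍ[ℝ])
    (B : Matrix (Fin 3) (Fin 3) ℍ[ℝ])
    (hB : B = !![a, b, c; d, e, f; g, h, l])
    (J : Matrix (Fin 3) (Fin 3) ℍ[ℝ])
    (hJ : J = !![0, 0, 1; 0, 1, 0; 1, 0, 0])
    (hSp : Bᴴ * J * B = J)
    (ha : ∃ r : ℝ, a = (r : ℍ[ℝ])) (he : ∃ r : ℝ, e = (r : ℍ[ℝ]))
    (hl : ∃ r : ℝ, l = (r : ℍ[ℝ]))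
    (hc : c.re = 0) (hg : g.re = 0) :
    b = 0 ∧ d = 0 ∧ f = 0 ∧ h = 0 := by
  subst hB hJ
  obtain ⟨ra, ha⟩ := ha
  obtain ⟨rl, hl⟩ := hl
  -- star of purely imaginary quaternions
  have hsc : star c = -c := by
    have h1 : star c + c = 0 := by rw [c.star_add_self', hc]; simp
    exact eq_neg_of_add_eq_zero_left h1
  have hsg : star g = -g := by
    have h1 : star g + g = 0 := by rw [g.star_add_self', hg]; simp
    exact eq_neg_of_add_eq_zero_left h1
  -- extract matrix entries
  have e00 := congrFun (congrFun hSp 0) 0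
  have e01 := congrFun (congrFun hSp 0) 1
  have e02 := congrFun (congrFun hSp 0) 2
  have e20 := congrFun (congrFun hSp 2) 0
  have e21 := congrFun (congrFun hSp 2) 1
  have e22' := congrFun (congrFun hSp 2) 2
  simp [Matrix.mul_apply, Fin.sum_univ_three, Matrix.conjTranspose_apply]
    at e00 e01 e02 e20 e21 e22'
  have e22 : star l * c + star f * f + star c * l = 0 := by
    rw [e22']
  clear e22'
  -- e00 : star g * a + star d * d + star a * g = 0   (with a = ↑ra etc.)
  rw [ha, hsg, star_coe] at e00 e01 e02
  rw [hl, hsc, star_coe] at e20 e21 e22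
  rw [hl] at e02
  rw [ha] at e20
  rw [coe_commutes ra g] at e00
  rw [coe_commutes rl c] at e22
  -- e00 : -g * ↑ra + star d * d + g * ↑ra = 0
  have hd : d = 0 := by
    have h2 : star d * d = 0 := by
      have : star d * d = -(-g * (ra : ℍ[ℝ])) - g * (ra : ℍ[ℝ])
          + (-g * (ra : ℍ[ℝ]) + star d * d + g * (ra : ℍ[ℝ])) := by noncomm_ring
      rw [this, e00]; noncomm_ring
    have h3 : ((normSq d : ℝ) : ℍ[ℝ]) = 0 := by rw [← Quaternion.star_mul_self, h2]
    have h4 : (normSq d : ℝ) = 0 := Quaternion.coe_injective (by simpa using h3)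
    exact Quaternion.normSq_eq_zero.mp h4
  have hf : f = 0 := by
    have h2 : star f * f = 0 := by
      have : star f * f = -(c * (rl : ℍ[ℝ])) - (-c * (rl : ℍ[ℝ]))
          + (c * (rl : ℍ[ℝ]) + star f * f + -c * (rl : ℍ[ℝ])) := by noncomm_ring
      rw [this, e22]; noncomm_ring
    have h3 : ((normSq f : ℝ) : ℍ[ℝ]) = 0 := by rw [← Quaternion.star_mul_self, h2]
    have h4 : (normSq f : ℝ) = 0 := Quaternion.coe_injective (by simpa using h3)
    exact Quaternion.normSq_eq_zero.mp h4
  simp only [hd, hf, star_zero, zero_mul, mul_zero, add_zero, zero_add] at e01 e02 e20 e21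
  -- e01 : -g * b + ↑ra * h = 0
  have E1 : (ra : ℍ[ℝ]) * h = g * b := by
    have : (ra : ℍ[ℝ]) * h = g * b + (-g * b + (ra : ℍ[ℝ]) * h) := by noncomm_ring
    rw [this, e01, add_zero]
  -- e21 : ↑rl * b + -c * h = 0
  have E2 : (rl : ℍ[ℝ]) * b = c * h := by
    have : (rl : ℍ[ℝ]) * b = c * h + ((rl : ℍ[ℝ]) * b + -c * h) := by noncomm_ring
    rw [this, e21, add_zero]
  -- e20 : ↑rl * ↑ra + -c * g = 1
  have E3 : c * g = (rl : ℍ[ℝ]) * (ra : ℍ[ℝ]) - 1 := by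
    have : c * g = (rl : ℍ[ℝ]) * (ra : ℍ[ℝ])
        - ((rl : ℍ[ℝ]) * (ra : ℍ[ℝ]) + -c * g) := by noncomm_ring
    rw [this, e20]
  -- e02 : -g * c + ↑ra * ↑rl = 1
  have E4 : g * c = (ra : ℍ[ℝ]) * (rl : ℍ[ℝ]) - 1 := by
    have : g * c = (ra : ℍ[ℝ]) * (rl : ℍ[ℝ])
        - (-g * c + (ra : ℍ[ℝ]) * (rl : ℍ[ℝ])) := by noncomm_ring
    rw [this, e02]
  have hcomm : (ra : ℍ[ℝ]) * (rl : ℍ[ℝ]) = (rl : ℍ[ℝ]) * (ra : ℍ[ℝ]) := by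
    rw [← Quaternion.coe_mul, ← Quaternion.coe_mul, mul_comm]
  -- b = 0
  have hb : b = 0 := by
    have k2 : (ra : ℍ[ℝ]) * ((rl : ℍ[ℝ]) * b) = ((rl : ℍ[ℝ]) * (ra : ℍ[ℝ]) - 1) * b := by
      calc (ra : ℍ[ℝ]) * ((rl : ℍ[ℝ]) * b) = (ra : ℍ[ℝ]) * (c * h) := by rw [E2]
        _ = c * ((ra : ℍ[ℝ]) * h) := by
            rw [← mul_assoc, ← mul_assoc, coe_commutes]
        _ = c * (g * b) := by rw [E1]
        _ = (c * g) * b := by rw [mul_assoc]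
        _ = ((rl : ℍ[ℝ]) * (ra : ℍ[ℝ]) - 1) * b := by rw [E3]
    have k4 : (rl : ℍ[ℝ]) * (ra : ℍ[ℝ]) * b = (rl : ℍ[ℝ]) * (ra : ℍ[ℝ]) * b - b := by
      calc (rl : ℍ[ℝ]) * (ra : ℍ[ℝ]) * b = (ra : ℍ[ℝ]) * ((rl : ℍ[ℝ]) * b) := by
            rw [← hcomm, mul_assoc]
        _ = ((rl : ℍ[ℝ]) * (ra : ℍ[ℝ]) - 1) * b := k2
        _ = (rl : ℍ[ℝ]) * (ra : ℍ[ℝ]) * b - b := by noncomm_ring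
    have := sub_eq_self.mp k4.symm
    -- this : b = 0? sub_eq_self : a - b = a ↔ b = 0
    exact this
  rw [hb, mul_zero] at E1 E2
  -- E1 : ↑ra * h = 0, E2 : 0 = c * h
  have hh : h = 0 := by
    have k1 : g * (c * h) = 0 := by rw [← E2, mul_zero]
    have k2 : ((ra : ℍ[ℝ]) * (rl : ℍ[ℝ]) - 1) * h = 0 := by
      rw [← E4, mul_assoc]; exact k1
    have k3 : (ra : ℍ[ℝ]) * (rl : ℍ[ℝ]) * h = 0 := by
      rw [hcomm, mul_assoc, E1, mul_zero]
    have k4 : (ra : ℍ[ℝ]) * (rl : ℍ[ℝ]) * h - h = 0 := by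
      rw [← k2]; noncomm_ring
    rw [k3] at k4
    simpa using k4
  exact ⟨hb, hd, hf, hh⟩
end
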